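/- Let α ≥ 2 be a cardinal and κ an infinite cardinal. Then: (a) the following are equivalent: (i) α^{<κ} = (α^{<κ})^{<κ}; (ii) either κ is regular or there is a cardinal ν < κ such that α^ν = α^{<κ}. (b) If the conditions in (a) fail, then κ and α^{<κ} are both singular cardinals and cf(α^{<κ}) = cf(κ). -/

import Mathlib

open Cardinal TopologicalSpace Set

universe u

namespace StmtAux

variable {α κ : Cardinal.{u}}

/-- The sup property of `powerlt`. -/
lemma exists_lt_powerlt {c : Cardinal.{u}} (h : c < α ^< κ) : ∃ ν < κ, c < α ^ ν := by
  by_contra hc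
  push_neg at hc
  exact absurd (powerlt_le.2 fun x hx => hc x hx) (not_le.2 h)

lemma le_powerlt_self (hα : 2 ≤ α) (hκ : ℵ₀ ≤ κ) : κ ≤ α ^< κ := by
  by_contra h
  push_neg at h
  have h2 : α ^< κ < 2 ^ (α ^< κ) := cantor _
  have h3 : (2 : Cardinal) ^ (α ^< κ) ≤ α ^ (α ^< κ) := power_le_power_right hα
  have h4 : α ^ (α ^< κ) ≤ α ^< κ := le_powerlt α h
  exact absurd ((h2.trans_le h3).trans_le h4) (lt_irrefl _)

lemma self_le_powerlt (hκ : ℵ₀ ≤ κ) (μ : Cardinal.{u}) : μ ≤ μ ^< κ := by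
  have : μ ^ (1 : Cardinal) ≤ μ ^< κ := le_powerlt μ (one_lt_aleph0.trans_le hκ)
  rwa [power_one] at this

/-- Counting bounded functions: if `lam < cof μ.ord` and all smaller cardinals
satisfy `c ^ lam ≤ μ`, then `μ ^ lam ≤ μ`. -/
lemma pow_le_of_lt_cof {μ lam : Cardinal.{u}} (hμ : ℵ₀ ≤ μ) (hcof : lam < (μ.ord).cof)
    (hbound : ∀ c < μ, c ^ lam ≤ μ) : μ ^ lam ≤ μ := by
  haveI : IsWellOrder μ.ord.ToType (· < ·) := isWellOrder_lt
  have hT : #(μ.ord.ToType) = μ := by rw [mk_toType, card_ord]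
  have hL : #(lam.out) = lam := mk_out lam
  have hpow : μ ^ lam = #(lam.out → μ.ord.ToType) := by
    calc μ ^ lam = #(μ.ord.ToType) ^ #(lam.out) := by rw [hT, hL]
      _ = #(lam.out → μ.ord.ToType) := power_def _ _
  rw [hpow]
  have hcover : (⋃ b : μ.ord.ToType,
      {f : lam.out → μ.ord.ToType | ∀ i, f i < b}) = Set.univ := by
    ext f
    simp only [mem_iUnion, mem_univ, iff_true, mem_setOf_eq]
    have hb : Set.Bounded (· < ·) (range f) := by
      by_contra hnb
      have hcf : IsCofinal (range f) := by
        by_contra h'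
        exact hnb (not_isCofinal_iff.1 h')
      have := Order.cof_le hcf
      rw [Ordinal.cof_toType] at this
      exact absurd (this.trans (mk_range_le.trans_eq hL)) (not_le.2 hcof)
    obtain ⟨b, hb⟩ := hb
    exact ⟨b, fun i => hb (f i) (mem_range_self i)⟩
  have h1 : #(lam.out → μ.ord.ToType) ≤
      Cardinal.sum fun b : μ.ord.ToType => #{f : lam.out → μ.ord.ToType | ∀ i, f i < b} := by
    rw [← mk_univ, ← hcover]
    exact mk_iUnion_le_sum_mk
  have h2 : ∀ b : μ.ord.ToType, #{f : lam.out → μ.ord.ToType | ∀ i, f i < b} ≤ μ := by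
    intro b
    have hinj : #{f : lam.out → μ.ord.ToType | ∀ i, f i < b} ≤
        #(lam.out → {y : μ.ord.ToType // y < b}) := by
      refine mk_le_of_injective
        (f := fun f i => (⟨f.1 i, f.2 i⟩ : {y : μ.ord.ToType // y < b})) ?_
      intro f g hfg
      apply Subtype.ext
      funext i
      exact congrArg Subtype.val (congrFun hfg i)
    have hIio : #{y : μ.ord.ToType // y < b} < μ := by
      rw [← Ordinal.card_typein, ← Cardinal.lt_ord]
      exact (Ordinal.typein_lt_type _ b).trans_eq (Ordinal.type_toType _)
    have heq : #(lam.out → {y : μ.ord.ToType // y < b}) =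
        #{y : μ.ord.ToType // y < b} ^ lam := by
      rw [← power_def, hL]
    exact hinj.trans (heq.le.trans (hbound _ hIio))
  calc #(lam.out → μ.ord.ToType)
      ≤ Cardinal.sum fun b : μ.ord.ToType => #{f : lam.out → μ.ord.ToType | ∀ i, f i < b} := h1
    _ ≤ Cardinal.sum fun _ : μ.ord.ToType => μ := Cardinal.sum_le_sum _ _ h2
    _ = #(μ.ord.ToType) * μ := sum_const' _ μ
    _ = μ * μ := by rw [hT]
    _ = μ := mul_eq_self hμ

lemma cof_eq_cof (hα : 2 ≤ α) (hκ : ℵ₀ ≤ κ)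
    (hna : ∀ ν < κ, α ^ ν < α ^< κ) :
    (((α ^< κ).ord).cof : Cardinal.{u}) = (κ.ord).cof := by
  have hα0 : α ≠ 0 := by positivity
  apply le_antisymm
  · -- cof μ.ord ≤ cof κ.ord
    obtain ⟨ι, f, hf, hc⟩ := Ordinal.exists_lsub_cof κ.ord
    set g : ι → Ordinal.{u} := fun i => (α ^ (f i).card).ord with hg
    have hlsub : Ordinal.lsub g = (α ^< κ).ord := by
      apply le_antisymm
      · apply Ordinal.lsub_le
        intro i
        apply Cardinal.ord_lt_ord.2
        apply hna
        rw [← Cardinal.lt_ord, ← hf]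
        exact Ordinal.lt_lsub f i
      · by_contra h
        push_neg at h
        have hcard : (Ordinal.lsub g).card < α ^< κ := Cardinal.lt_ord.1 h
        obtain ⟨ν, hν, hlt⟩ := exists_lt_powerlt hcard
        have : ν.ord < Ordinal.lsub f := by rw [hf]; exact Cardinal.ord_lt_ord.2 hν
        obtain ⟨i, hi⟩ := Ordinal.lt_lsub_iff.1 this
        have h1 : ν ≤ (f i).card := by
          have := Ordinal.card_le_card hi
          rwa [Cardinal.card_ord] at this
        have h2 : α ^ ν ≤ (Ordinal.lsub g).card := by
          calc α ^ ν ≤ α ^ (f i).card := power_le_power_left hα0 h1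
            _ = (g i).card := (Cardinal.card_ord _).symm
            _ ≤ (Ordinal.lsub g).card := Ordinal.card_le_card (Ordinal.lt_lsub g i).le
        exact absurd (h2.trans_lt hlt) (lt_irrefl _)
    calc ((α ^< κ).ord).cof = (Ordinal.lsub g).cof := by rw [hlsub]
      _ ≤ #ι := Ordinal.cof_lsub_le g
      _ = (κ.ord).cof := hc
  · -- cof κ.ord ≤ cof μ.ord
    obtain ⟨ι, f, hf, hc⟩ := Ordinal.exists_lsub_cof (α ^< κ).ord
    have hchoice : ∀ i : ι, ∃ ν, ν < κ ∧ (f i).card < α ^ ν := by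
      intro i
      have : (f i).card < α ^< κ := by
        rw [← Cardinal.lt_ord, ← hf]
        exact Ordinal.lt_lsub f i
      obtain ⟨ν, hν, hlt⟩ := exists_lt_powerlt this
      exact ⟨ν, hν, hlt⟩
    choose ν hν hνlt using hchoice
    set G : ι → Ordinal.{u} := fun i => (ν i).ord with hG
    have hlsub : Ordinal.lsub G = κ.ord := by
      apply le_antisymm
      · exact Ordinal.lsub_le fun i => Cardinal.ord_lt_ord.2 (hν i)
      · by_contra h
        push_neg at h
        have hcard : (Ordinal.lsub G).card < κ := Cardinal.lt_ord.1 h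
        have h1 : (α ^ (Ordinal.lsub G).card).ord < Ordinal.lsub f := by
          rw [hf]
          exact Cardinal.ord_lt_ord.2 (hna _ hcard)
        obtain ⟨i, hi⟩ := Ordinal.lt_lsub_iff.1 h1
        have h2 : α ^ (Ordinal.lsub G).card ≤ (f i).card := by
          have := Ordinal.card_le_card hi
          rwa [Cardinal.card_ord] at this
        have h3 : (Ordinal.lsub G).card < ν i := by
          by_contra h3
          push_neg at h3
          exact absurd ((power_le_power_left hα0 h3).trans h2) (not_le.2 (hνlt i))
        have h4 : ν i ≤ (Ordinal.lsub G).card := by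
          have := Ordinal.card_le_card (Ordinal.lt_lsub G i).le
          rwa [Cardinal.card_ord] at this
        exact absurd (h4.trans_lt h3) (lt_irrefl _)
    calc (κ.ord).cof = (Ordinal.lsub G).cof := by rw [hlsub]
      _ ≤ #ι := Ordinal.cof_lsub_le G
      _ = ((α ^< κ).ord).cof := hc

end StmtAux

open StmtAux in
theorem stmt1 (α κ : Cardinal.{u}) (hα : 2 ≤ α) (hκ : ℵ₀ ≤ κ) :
    ((α ^< κ = (α ^< κ) ^< κ) ↔
      (κ.IsRegular ∨ ∃ ν < κ, α ^ ν = α ^< κ)) ∧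
    (¬(α ^< κ = (α ^< κ) ^< κ) →
      (ℵ₀ ≤ κ ∧ ¬κ.IsRegular) ∧ (ℵ₀ ≤ α ^< κ ∧ ¬(α ^< κ).IsRegular) ∧
        ((α ^< κ).ord).cof = (κ.ord).cof) := by
  have hα0 : α ≠ 0 := by positivity
  set μ := α ^< κ with hμdef
  have hκμ : κ ≤ μ := le_powerlt_self hα hκ
  have hμinf : ℵ₀ ≤ μ := hκ.trans hκμ
  have hle : μ ≤ μ ^< κ := self_le_powerlt hκ μ
  -- the easy implication (ii) → (i)
  have himp : (κ.IsRegular ∨ ∃ ν < κ, α ^ ν = μ) → μ = μ ^< κ := by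
    intro h
    refine le_antisymm hle (powerlt_le.2 fun x hx => ?_)
    rcases h with hreg | ⟨ν, hν, he⟩
    · -- regular case
      by_cases hatt : ∃ ν < κ, α ^ ν = μ
      · obtain ⟨ν, hν, he⟩ := hatt
        calc μ ^ x = α ^ (ν * x) := by rw [power_mul, he]
          _ ≤ μ := le_powerlt α (mul_lt_of_lt hκ hν hx)
      · push_neg at hatt
        have hna : ∀ ν < κ, α ^ ν < μ :=
          fun ν hν => (le_powerlt α hν).lt_of_ne (hatt ν hν)
        have hcof : (μ.ord).cof = κ := by
          rw [cof_eq_cof hα hκ hna, hreg.cof_eq]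
        apply pow_le_of_lt_cof hμinf (by rw [hcof]; exact hx)
        intro c hc
        obtain ⟨ν, hν, hlt⟩ := exists_lt_powerlt hc
        calc c ^ x ≤ (α ^ ν) ^ x := power_le_power_right hlt.le
          _ = α ^ (ν * x) := power_mul.symm
          _ ≤ μ := le_powerlt α (mul_lt_of_lt hκ hν hx)
    · calc μ ^ x = α ^ (ν * x) := by rw [power_mul, he]
        _ ≤ μ := le_powerlt α (mul_lt_of_lt hκ hν hx)
  -- the converse: if (ii) fails then (i) fails
  have hconv : ¬(κ.IsRegular ∨ ∃ ν < κ, α ^ ν = μ) → μ ≠ μ ^< κ := by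
    intro h
    push_neg at h
    obtain ⟨hnreg, hne⟩ := h
    have hna : ∀ ν < κ, α ^ ν < μ :=
      fun ν hν => (le_powerlt α hν).lt_of_ne (hne ν hν)
    have hcofeq : (μ.ord).cof = (κ.ord).cof := cof_eq_cof hα hκ hna
    have hcofκ : (κ.ord).cof < κ := by
      refine (Ordinal.cof_ord_le κ).lt_of_ne fun h' => hnreg ⟨hκ, h'.ge⟩
    have hkonig : μ < μ ^ (μ.ord).cof := lt_power_cof_ord hμinf
    have : μ < μ ^< κ := by
      refine hkonig.trans_le ?_
      rw [hcofeq]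
      exact le_powerlt μ hcofκ
    exact this.ne
  constructor
  · constructor
    · intro hi
      by_contra h
      exact hconv h hi
    · exact himp
  · intro hni
    have h2 : ¬(κ.IsRegular ∨ ∃ ν < κ, α ^ ν = μ) := fun h => hni (himp h)
    push_neg at h2
    obtain ⟨hnreg, hne⟩ := h2
    have hna : ∀ ν < κ, α ^ ν < μ :=
      fun ν hν => (le_powerlt α hν).lt_of_ne (hne ν hν)
    have hcofeq : (μ.ord).cof = (κ.ord).cof := cof_eq_cof hα hκ hna
    have hcofκ : (κ.ord).cof < κ := by
      refine (Ordinal.cof_ord_le κ).lt_of_ne fun h' => hnreg ⟨hκ, h'.ge⟩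
    have hμsing : ¬μ.IsRegular := by
      intro hr
      have : μ ≤ (μ.ord).cof := hr.2
      rw [hcofeq] at this
      exact absurd (this.trans_lt (hcofκ.trans_le hκμ)) (lt_irrefl _)
    exact ⟨⟨hκ, hnreg⟩, ⟨hμinf, hμsing⟩, hcofeq⟩
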